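/- Let A, B, C be nonempty finite types with decidable equality, and write d_A = Fintype.card A, d_B = Fintype.card B. Let F₁ be a set of matrices in Matrix (B × A) (B × A) ℂ, F₃ a set of matrices in Matrix (C × A) (C × A) ℂ, and F₄ a set of matrices in Matrix ((C × A) × (B × A)) ((C × A) × (B × A)) ℂ. Let μ ∈ F₁ and let ν : Matrix (C × B) (C × B) ℂ satisfy tr₁ ν = (d_B : ℂ)⁻¹ • 1. Define ν̃ : Matrix ((C × A) × (B × A)) ((C × A) × (B × A)) ℂ by ν̃ ((c,a),(b,a₀)) ((c',a'),(b',a₀')) = (d_A : ℂ)⁻¹ * ν (c,b) (c',b') * (if a = a₀ ∧ a' = a₀' then 1 else 0). Assume (i) ν̃ ∈ F₄, and (ii) for every τ ∈ F₄ with tr₁ τ = ((d_B * d_A : ℕ) : ℂ)⁻¹ • 1 and every σ ∈ F₁, the matrix ((d_B * d_A : ℕ) : ℂ) • (τ ⋆ σ) belongs to F₃. Then (d_B : ℂ) • (ν ⋆ μ) ∈ F₃. (This is the sequential-composition step in the sufficiency direction of Theorem 1: the renormalized Choi matrix of the composite of two Choi-defined operations is again a free state.) -/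

import Mathlib

open Matrix Kronecker BigOperators

/-- Partial trace over the first tensor factor. -/
noncomputable def tr₁ {X Y : Type*} [Fintype X] (M : Matrix (X × Y) (X × Y) ℂ) : Matrix Y Y ℂ :=
  Matrix.of fun y y' => ∑ x, M (x, y) (x, y')

/-- Link product of a bipartite matrix with a state. -/
noncomputable def linkState {S T : Type*} [Fintype T] (N : Matrix (S × T) (S × T) ℂ)
    (ρ : Matrix T T ℂ) : Matrix S S ℂ :=
  Matrix.of fun s s' => ∑ t, ∑ t', N (s, t) (s', t') * ρ t t'

/-- Link product of two Choi matrices. -/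
noncomputable def linkChoi {A B C : Type*} [Fintype B] (N : Matrix (C × B) (C × B) ℂ)
    (M : Matrix (B × A) (B × A) ℂ) : Matrix (C × A) (C × A) ℂ :=
  Matrix.of fun p q => ∑ b, ∑ b', N (p.1, b) (q.1, b') * M (b, p.2) (b', q.2)

theorem stmt0 {A B C : Type*} [Fintype A] [Fintype B] [Fintype C]
    [Nonempty A] [Nonempty B] [Nonempty C]
    [DecidableEq A] [DecidableEq B] [DecidableEq C]
    (F₁ : Set (Matrix (B × A) (B × A) ℂ)) (F₃ : Set (Matrix (C × A) (C × A) ℂ))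
    (F₄ : Set (Matrix ((C × A) × (B × A)) ((C × A) × (B × A)) ℂ))
    (μ : Matrix (B × A) (B × A) ℂ) (hμ : μ ∈ F₁)
    (ν : Matrix (C × B) (C × B) ℂ)
    (hν : tr₁ ν = (Fintype.card B : ℂ)⁻¹ • (1 : Matrix B B ℂ))
    (νt : Matrix ((C × A) × (B × A)) ((C × A) × (B × A)) ℂ)
    (hνt : ∀ (c : C) (a : A) (b : B) (a₀ : A) (c' : C) (a' : A) (b' : B) (a₀' : A),
      νt ((c, a), (b, a₀)) ((c', a'), (b', a₀')) =
        (Fintype.card A : ℂ)⁻¹ * ν (c, b) (c', b') *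
          (if a = a₀ ∧ a' = a₀' then 1 else 0))
    (hmem : νt ∈ F₄)
    (hclosed : ∀ τ ∈ F₄,
      tr₁ τ = ((Fintype.card B * Fintype.card A : ℕ) : ℂ)⁻¹ •
          (1 : Matrix (B × A) (B × A) ℂ) →
        ∀ σ ∈ F₁, ((Fintype.card B * Fintype.card A : ℕ) : ℂ) • linkState τ σ ∈ F₃) :
    (Fintype.card B : ℂ) • linkChoi ν μ ∈ F₃ := by
  have hA : (Fintype.card A : ℂ) ≠ 0 := Nat.cast_ne_zero.2 Fintype.card_ne_zero
  have htr : tr₁ νt = ((Fintype.card B * Fintype.card A : ℕ) : ℂ)⁻¹ •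
      (1 : Matrix (B × A) (B × A) ℂ) := by
    ext ⟨b, a₀⟩ ⟨b', a₀'⟩
    simp only [tr₁, Matrix.of_apply, Matrix.smul_apply, Matrix.one_apply, smul_eq_mul]
    rw [Fintype.sum_prod_type]
    have : ∀ c : C, ∑ a : A, νt ((c, a), (b, a₀)) ((c, a), (b', a₀')) =
        (Fintype.card A : ℂ)⁻¹ * ν (c, b) (c, b') * (if a₀ = a₀' then 1 else 0) := by
      intro c
      simp only [hνt]
      by_cases h : a₀ = a₀'
      · subst h
        simp
      · rw [if_neg h, mul_zero]
        refine Finset.sum_eq_zero fun x _ => ?_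
        rw [if_neg (by rintro ⟨rfl, rfl⟩; exact h rfl), mul_zero]
    simp only [this]
    rw [← Finset.sum_mul, ← Finset.mul_sum]
    have hνbb : ∑ c : C, ν (c, b) (c, b') = (Fintype.card B : ℂ)⁻¹ * (if b = b' then 1 else 0) := by
      have := congrFun (congrFun hν b) b'
      simpa [tr₁, Matrix.one_apply, mul_comm] using this
    rw [hνbb]
    push_cast
    rw [mul_inv]
    by_cases hb : b = b' <;> by_cases ha : a₀ = a₀' <;>
      simp [hb, ha, Prod.ext_iff, mul_comm]
  have key := hclosed νt hmem htr μ hμ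
  have heq : ((Fintype.card B * Fintype.card A : ℕ) : ℂ) • linkState νt μ =
      (Fintype.card B : ℂ) • linkChoi ν μ := by
    ext ⟨c, a⟩ ⟨c', a'⟩
    simp only [linkState, linkChoi, Matrix.of_apply, Matrix.smul_apply, smul_eq_mul]
    rw [Fintype.sum_prod_type]
    have e1 : ∀ (b : B) (a₀ : A), ∑ q : B × A, νt ((c, a), (b, a₀)) ((c', a'), q) * μ (b, a₀) q =
        (if a = a₀ then 1 else 0) * ∑ b' : B,
          (Fintype.card A : ℂ)⁻¹ * ν (c, b) (c', b') * μ (b, a₀) (b', a') := by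
      intro b a₀
      rw [Fintype.sum_prod_type, Finset.mul_sum]
      refine Finset.sum_congr rfl fun b' _ => ?_
      have : ∀ a₀' : A, νt ((c, a), (b, a₀)) ((c', a'), (b', a₀')) * μ (b, a₀) (b', a₀') =
          if a₀' = a' then (if a = a₀ then 1 else 0) *
            ((Fintype.card A : ℂ)⁻¹ * ν (c, b) (c', b') * μ (b, a₀) (b', a')) else 0 := by
        intro a₀'
        rw [hνt]
        by_cases h2 : a₀' = a'
        · subst h2
          by_cases h1 : a = a₀ <;> simp [h1]
        · rw [if_neg h2, if_neg (fun hh => h2 hh.2.symm), mul_zero, zero_mul]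
      simp only [this]
      simp
    simp only [e1]
    have : ∀ b : B, ∑ a₀ : A, (if a = a₀ then 1 else 0) * ∑ b' : B,
        (Fintype.card A : ℂ)⁻¹ * ν (c, b) (c', b') * μ (b, a₀) (b', a') =
        ∑ b' : B, (Fintype.card A : ℂ)⁻¹ * ν (c, b) (c', b') * μ (b, a) (b', a') := by
      intro b
      rw [Finset.sum_eq_single a] <;> simp +contextual [eq_comm]
    simp only [this]
    rw [Finset.mul_sum, Finset.mul_sum]
    congr 1; ext b
    rw [Finset.mul_sum, Finset.mul_sum]
    congr 1; ext b'
    push_cast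
    field_simp
  rwa [heq] at key
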